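/- Consider N companies with parameters π⁰_i, π¹_i, γ_i > 0, ρ_i = 1/π¹_i + 1/γ_i, E^bau_i = π⁰_i/π¹_i, W^bau_i = (π⁰_i)²/(2π¹_i); set ρ = Σ_i ρ_i, E^bau = Σ_i E^bau_i. Let 0 < A < E^bau, τ = (E^bau − A)/ρ, and assume τρ_i < E^bau_i for every i. Then: (i) aggregate optimal emissions under the tax scheme equal the cap: Σ_i (E^bau_i − τρ_i) = A; (ii) the aggregate optimal company wealth is W^tax_C = Σ_i W^bau_i − τ(E^bau − (τ/2)ρ) and the regulator's wealth is W^tax_R = τA; (iii) if moreover λ > τ with λρ_i < E^bau_i for all i and, under the market scheme, every company buys certificates directly at the auction, then the clearing spot price is S = τ, each company's optimal market wealth W^bau_i − S(E^bau_i − (S/2)ρ_i) equals its optimal tax wealth W^bau_i − τ(E^bau_i − (τ/2)ρ_i), the aggregate certificate demand Σ_i (E^bau_i − Sρ_i) equals A, and the regulator's market wealth S·A equals W^tax_R. -/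

import Mathlib

/-- With the tax rate calibrated as `τ = (E^bau − A)/ρ`:
(i) aggregate optimal emissions under the tax scheme equal the cap `A`;
(ii) the aggregate optimal company wealth is `ΣW^bau_i − τ(E^bau − (τ/2)ρ)`
and the regulator's tax wealth is `τA`; (iii) if `λ > τ` with `λρ_i < E^bau_i`
and all companies buy directly at the auction, the clearing spot price is
`S = τ` (it clears, lies in `(0, λ]`, and is the unique such price), each
company's optimal market wealth equals its optimal tax wealth, the aggregate
certificate demand equals `A`, and the regulator's market wealth `S·A`
equals `τA`. -/
theorem tax_vs_spot_market_equivalence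
    {N : ℕ} (π0 π1 γ : Fin N → ℝ)
    (hπ0 : ∀ i, 0 < π0 i) (hπ1 : ∀ i, 0 < π1 i) (hγ : ∀ i, 0 < γ i)
    (ρ Ebau W : Fin N → ℝ)
    (hρ : ∀ i, ρ i = 1 / π1 i + 1 / γ i)
    (hEbau : ∀ i, Ebau i = π0 i / π1 i)
    (hW : ∀ i, W i = (π0 i) ^ 2 / (2 * π1 i))
    (ρtot Etot : ℝ) (hρtot : ρtot = ∑ i, ρ i) (hEtot : Etot = ∑ i, Ebau i)
    (A : ℝ) (hA0 : 0 < A) (hA : A < Etot)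
    (τ : ℝ) (hτ : τ = (Etot - A) / ρtot)
    (hτfeas : ∀ i, τ * ρ i < Ebau i) :
    -- (i) aggregate tax emissions hit the cap
    (∑ i, (Ebau i - τ * ρ i)) = A ∧
    -- (ii) aggregate company wealth and regulator wealth under the tax scheme
    (∑ i, (W i - τ * (Ebau i - τ / 2 * ρ i)))
      = (∑ i, W i) - τ * (Etot - τ / 2 * ρtot) ∧
    -- (iii) spot market scheme: identical outcomes
    (∀ lam : ℝ, τ < lam → (∀ i, lam * ρ i < Ebau i) →
      (τ ∈ Set.Ioc 0 lam ∧
       (∑ i, (Ebau i - τ * ρ i)) = A ∧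
       (∀ S ∈ Set.Ioc 0 lam, (∑ i, (Ebau i - S * ρ i)) = A → S = τ)) ∧
      (∀ S : ℝ, S = τ →
        (∀ i, W i - S * (Ebau i - S / 2 * ρ i) = W i - τ * (Ebau i - τ / 2 * ρ i)) ∧
        (∑ i, (Ebau i - S * ρ i)) = A ∧
        S * A = τ * A)) := by
  have hρpos : ∀ i, 0 < ρ i := fun i => by
    rw [hρ i]
    have := hπ1 i; have := hγ i
    positivity
  have hρtotpos : 0 < ρtot := by
    rcases Nat.eq_zero_or_pos N with h0 | hpos
    · exfalso
      subst h0
      simp at hEtot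
      linarith
    · rw [hρtot]
      have : Nonempty (Fin N) := Fin.pos_iff_nonempty.mp hpos
      exact Finset.sum_pos (fun i _ => hρpos i) Finset.univ_nonempty
  have hτpos : 0 < τ := by
    rw [hτ]; apply div_pos <;> linarith
  have hclear : (∑ i, (Ebau i - τ * ρ i)) = A := by
    rw [Finset.sum_sub_distrib, ← Finset.mul_sum, ← hρtot, ← hEtot, hτ]
    field_simp
    ring
  refine ⟨hclear, ?_, ?_⟩
  · rw [Finset.sum_sub_distrib, ← Finset.mul_sum]
    congr 1
    rw [Finset.sum_sub_distrib, ← Finset.mul_sum, ← hρtot, ← hEtot]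
  · intro lam hlam hfeas
    refine ⟨⟨⟨hτpos, le_of_lt hlam⟩, hclear, ?_⟩, ?_⟩
    · intro S hS hSA
      rw [Finset.sum_sub_distrib, ← Finset.mul_sum, ← hρtot, ← hEtot] at hSA
      have : Etot - τ * ρtot = A := by
        rw [hτ]; field_simp; ring
      have := hSA.trans this.symm
      have : (S - τ) * ρtot = 0 := by ring_nf; linarith [this]
      rcases mul_eq_zero.mp this with h | h
      · linarith
      · linarith
    · intro S hS
      subst hS
      exact ⟨fun i => rfl, hclear, rfl⟩
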